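/- arXiv:1802.05390 — 2 statements merged into one kernel-verified Lean document; each statement's English description precedes it below -/
import Mathlib

section
/- For every λ ∈ (0,1) and every χ ∈ ℝ, the derivative f_λ' of f_λ satisfies χ · f_λ'(χ) ≥ χ⁴ − χ². -/
/-- The smoothed double-well potential `f_λ`. -/
noncomputable def smoothPotential (l x : ℝ) : ℝ :=
  if 1 + l ≤ x then 1 / (2 * l) * (x - (1 + l / 2)) ^ 2 + 1 / 4 * (x ^ 2 - 1) ^ 2 + l / 24
  else if 1 < x then 1 / 4 * (x ^ 2 - 1) ^ 2 + 1 / (6 * l ^ 2) * (x - 1) ^ 3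
  else if -1 ≤ x then 1 / 4 * (x ^ 2 - 1) ^ 2
  else if -1 - l < x then 1 / 4 * (x ^ 2 - 1) ^ 2 - 1 / (6 * l ^ 2) * (x + 1) ^ 3
  else 1 / (2 * l) * (x + (1 + l / 2)) ^ 2 + 1 / 4 * (x ^ 2 - 1) ^ 2 + l / 24

private lemma hQ (x : ℝ) : HasDerivAt (fun y : ℝ => 1 / 4 * (y ^ 2 - 1) ^ 2) (x * (x ^ 2 - 1)) x := by
  have h := (((hasDerivAt_pow 2 x).sub_const 1).pow 2).const_mul (1/4 : ℝ)
  refine h.congr_deriv ?_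
  push_cast
  ring

private lemma hP1 (l : ℝ) (hl : l ≠ 0) (x : ℝ) :
    HasDerivAt (fun y : ℝ => 1 / (2 * l) * (y - (1 + l / 2)) ^ 2 + 1 / 4 * (y ^ 2 - 1) ^ 2 + l / 24)
      (1 / l * (x - (1 + l / 2)) + x * (x ^ 2 - 1)) x := by
  have hsq := (((hasDerivAt_id x).sub_const (1 + l/2)).pow 2).const_mul (1 / (2*l))
  have h := (hsq.add (hQ x)).add_const (l / 24)
  refine h.congr_deriv ?_
  push_cast [id]
  field_simp

private lemma hP2 (l : ℝ) (hl : l ≠ 0) (x : ℝ) :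
    HasDerivAt (fun y : ℝ => 1 / 4 * (y ^ 2 - 1) ^ 2 + 1 / (6 * l ^ 2) * (y - 1) ^ 3)
      (x * (x ^ 2 - 1) + 1 / (2 * l ^ 2) * (x - 1) ^ 2) x := by
  have hc := (((hasDerivAt_id x).sub_const 1).pow 3).const_mul (1 / (6 * l ^ 2))
  have h := (hQ x).add hc
  have h2 : l ^ 2 ≠ 0 := pow_ne_zero 2 hl
  refine h.congr_deriv ?_
  push_cast [id]
  field_simp
  ring

private lemma hP4 (l : ℝ) (hl : l ≠ 0) (x : ℝ) :
    HasDerivAt (fun y : ℝ => 1 / 4 * (y ^ 2 - 1) ^ 2 - 1 / (6 * l ^ 2) * (y + 1) ^ 3)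
      (x * (x ^ 2 - 1) - 1 / (2 * l ^ 2) * (x + 1) ^ 2) x := by
  have hc := (((hasDerivAt_id x).add_const 1).pow 3).const_mul (1 / (6 * l ^ 2))
  have h := (hQ x).sub hc
  have h2 : l ^ 2 ≠ 0 := pow_ne_zero 2 hl
  refine h.congr_deriv ?_
  push_cast [id]
  field_simp
  ring

private lemma hP5 (l : ℝ) (hl : l ≠ 0) (x : ℝ) :
    HasDerivAt (fun y : ℝ => 1 / (2 * l) * (y + (1 + l / 2)) ^ 2 + 1 / 4 * (y ^ 2 - 1) ^ 2 + l / 24)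
      (1 / l * (x + (1 + l / 2)) + x * (x ^ 2 - 1)) x := by
  have hsq := (((hasDerivAt_id x).add_const (1 + l/2)).pow 2).const_mul (1 / (2*l))
  have h := (hsq.add (hQ x)).add_const (l / 24)
  refine h.congr_deriv ?_
  push_cast [id]
  field_simp

private lemma glueDeriv {F f g : ℝ → ℝ} {a D : ℝ}
    (hf : HasDerivAt f D a) (hg : HasDerivAt g D a)
    (hfa : F =ᶠ[nhdsWithin a (Set.Iic a)] f)
    (hga : F =ᶠ[nhdsWithin a (Set.Ici a)] g)
    (hFf : F a = f a) (hFg : F a = g a) : HasDerivAt F D a := by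
  have h1 : HasDerivWithinAt F D (Set.Iic a) a :=
    (hf.hasDerivWithinAt).congr_of_eventuallyEq hfa hFf
  have h2 : HasDerivWithinAt F D (Set.Ici a) a :=
    (hg.hasDerivWithinAt).congr_of_eventuallyEq hga hFg
  have h3 := h1.union h2
  rw [Set.Iic_union_Ici] at h3
  exact hasDerivWithinAt_univ.mp h3

private lemma key (l : ℝ) (hl0 : 0 < l) (hl1 : l < 1) (x : ℝ) :
    ∃ D, HasDerivAt (smoothPotential l) D x ∧ x * D ≥ x ^ 4 - x ^ 2 := by
  have hl : l ≠ 0 := ne_of_gt hl0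
  rcases lt_trichotomy x (1 + l) with hA | hB | hC
  · rcases lt_trichotomy x 1 with hD | hE | hF
    · rcases lt_trichotomy x (-1) with hG | hH | hI
      · rcases lt_trichotomy x (-1 - l) with hJ | hK | hL
        · -- x < -1 - l : piece 5
          refine ⟨1 / l * (x + (1 + l / 2)) + x * (x ^ 2 - 1), ?_, ?_⟩
          · refine (hP5 l hl x).congr_of_eventuallyEq ?_
            filter_upwards [Iio_mem_nhds hJ] with y hy
            simp only [Set.mem_Iio] at hy
            rw [smoothPotential, if_neg (by linarith), if_neg (by linarith),
              if_neg (by linarith), if_neg (by linarith)]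
          · have h2 : 0 ≤ ((-x) * (-(x + (1 + l / 2)))) / l :=
              div_nonneg (mul_nonneg (by linarith) (by linarith)) hl0.le
            have e : x * (1 / l * (x + (1 + l / 2)) + x * (x ^ 2 - 1)) =
                ((-x) * (-(x + (1 + l / 2)))) / l + (x ^ 4 - x ^ 2) := by ring
            linarith
        · -- x = -1 - l : glue pieces 5 and 4
          subst hK
          refine ⟨1 / l * ((-1 - l) + (1 + l / 2)) + (-1 - l) * ((-1 - l) ^ 2 - 1), ?_, ?_⟩
          · refine glueDeriv (g := fun y : ℝ => 1 / 4 * (y ^ 2 - 1) ^ 2 - 1 / (6 * l ^ 2) * (y + 1) ^ 3)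
                (hP5 l hl _) ?_ ?_ ?_ ?_ ?_
            · have h := hP4 l hl (-1 - l)
              convert h using 1
              field_simp
              ring
            · refine Filter.eventuallyEq_of_mem self_mem_nhdsWithin fun y hy => ?_
              rw [smoothPotential, if_neg (by simp at hy ⊢; linarith),
                if_neg (by simp at hy ⊢; linarith), if_neg (by simp at hy ⊢; linarith),
                if_neg (by simp at hy ⊢; linarith)]
            · filter_upwards [self_mem_nhdsWithin,
                nhdsWithin_le_nhds (Iio_mem_nhds (show (-1 - l : ℝ) < -1 by linarith))]
                with y hy1 hy2
              simp only [Set.mem_Ici] at hy1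
              simp only [Set.mem_Iio] at hy2
              rcases eq_or_lt_of_le hy1 with h | h
              · rw [smoothPotential, if_neg (by linarith), if_neg (by linarith),
                  if_neg (by linarith), if_neg (by linarith)]
                rw [← h]
                field_simp
                ring
              · rw [smoothPotential, if_neg (by linarith), if_neg (by linarith),
                  if_neg (by linarith), if_pos h]
            · rw [smoothPotential, if_neg (by linarith), if_neg (by linarith),
                if_neg (by linarith), if_neg (by linarith)]
            · rw [smoothPotential, if_neg (by linarith), if_neg (by linarith),
                if_neg (by linarith), if_neg (by linarith)]
              field_simp
              ring
          · set x : ℝ := -1 - l with hx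
            have h2 : 0 ≤ ((-x) * (-(x + (1 + l / 2)))) / l :=
              div_nonneg (mul_nonneg (by rw [hx]; linarith) (by rw [hx]; linarith)) hl0.le
            have e : x * (1 / l * (x + (1 + l / 2)) + x * (x ^ 2 - 1)) =
                ((-x) * (-(x + (1 + l / 2)))) / l + (x ^ 4 - x ^ 2) := by ring
            linarith
        · -- -1 - l < x < -1 : piece 4
          refine ⟨x * (x ^ 2 - 1) - 1 / (2 * l ^ 2) * (x + 1) ^ 2, ?_, ?_⟩
          · refine (hP4 l hl x).congr_of_eventuallyEq ?_
            filter_upwards [IsOpen.mem_nhds isOpen_Ioo (show x ∈ Set.Ioo (-1 - l) (-1) from ⟨hL, hG⟩)]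
              with y hy
            obtain ⟨hy1, hy2⟩ := hy
            rw [smoothPotential, if_neg (by linarith), if_neg (by linarith),
              if_neg (by linarith), if_pos hy1]
          · have h2 : 0 ≤ ((-x) * (x + 1) ^ 2) / (2 * l ^ 2) :=
              div_nonneg (mul_nonneg (by linarith) (sq_nonneg _)) (by positivity)
            have e : x * (x * (x ^ 2 - 1) - 1 / (2 * l ^ 2) * (x + 1) ^ 2) =
                ((-x) * (x + 1) ^ 2) / (2 * l ^ 2) + (x ^ 4 - x ^ 2) := by ring
            linarith
      · -- x = -1 : glue pieces 4 and 3
        subst hH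
        refine ⟨(-1 : ℝ) * ((-1 : ℝ) ^ 2 - 1), ?_, ?_⟩
        · refine glueDeriv (f := fun y : ℝ => 1 / 4 * (y ^ 2 - 1) ^ 2 - 1 / (6 * l ^ 2) * (y + 1) ^ 3)
              ?_ (hQ (-1)) ?_ ?_ ?_ ?_
          · have h := hP4 l hl (-1)
            convert h using 1
            norm_num
          · filter_upwards [self_mem_nhdsWithin,
              nhdsWithin_le_nhds (Ioi_mem_nhds (show (-1 - l : ℝ) < -1 by linarith))]
              with y hy1 hy2
            simp only [Set.mem_Iic] at hy1
            simp only [Set.mem_Ioi] at hy2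
            rcases eq_or_lt_of_le hy1 with h | h
            · rw [smoothPotential, if_neg (by linarith), if_neg (by linarith),
                if_pos (by linarith)]
              rw [h]
              norm_num
            · rw [smoothPotential, if_neg (by linarith), if_neg (by linarith),
                if_neg (by linarith), if_pos hy2]
          · filter_upwards [self_mem_nhdsWithin,
              nhdsWithin_le_nhds (Iio_mem_nhds (show (-1 : ℝ) < 1 by norm_num))]
              with y hy1 hy2
            simp only [Set.mem_Ici] at hy1
            simp only [Set.mem_Iio] at hy2
            rw [smoothPotential, if_neg (by linarith), if_neg (by linarith), if_pos hy1]
          · rw [smoothPotential, if_neg (by linarith), if_neg (by linarith),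
              if_pos (by linarith)]
            norm_num
          · rw [smoothPotential, if_neg (by linarith), if_neg (by linarith),
              if_pos (by linarith)]
        · norm_num
      · -- -1 < x < 1 : piece 3
        refine ⟨x * (x ^ 2 - 1), ?_, ?_⟩
        · refine (hQ x).congr_of_eventuallyEq ?_
          filter_upwards [IsOpen.mem_nhds isOpen_Ioo (show x ∈ Set.Ioo (-1) 1 from ⟨hI, hD⟩)]
            with y hy
          obtain ⟨hy1, hy2⟩ := hy
          rw [smoothPotential, if_neg (by linarith), if_neg (by linarith), if_pos hy1.le]
        · exact le_of_eq (by ring)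
    · -- x = 1 : glue pieces 3 and 2
      subst hE
      refine ⟨(1 : ℝ) * ((1 : ℝ) ^ 2 - 1), ?_, ?_⟩
      · refine glueDeriv (g := fun y : ℝ => 1 / 4 * (y ^ 2 - 1) ^ 2 + 1 / (6 * l ^ 2) * (y - 1) ^ 3)
            (hQ 1) ?_ ?_ ?_ ?_ ?_
        · have h := hP2 l hl 1
          convert h using 1
          norm_num
        · filter_upwards [self_mem_nhdsWithin,
            nhdsWithin_le_nhds (Ioi_mem_nhds (show (-1 : ℝ) < 1 by norm_num))]
            with y hy1 hy2
          simp only [Set.mem_Iic] at hy1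
          simp only [Set.mem_Ioi] at hy2
          rw [smoothPotential, if_neg (by linarith), if_neg (by linarith), if_pos hy2.le]
        · filter_upwards [self_mem_nhdsWithin,
            nhdsWithin_le_nhds (Iio_mem_nhds (show (1 : ℝ) < 1 + l by linarith))]
            with y hy1 hy2
          simp only [Set.mem_Ici] at hy1
          simp only [Set.mem_Iio] at hy2
          rcases eq_or_lt_of_le hy1 with h | h
          · rw [smoothPotential, if_neg (by linarith), if_neg (by linarith),
              if_pos (by linarith)]
            rw [← h]
            norm_num
          · rw [smoothPotential, if_neg (by linarith), if_pos h]
        · rw [smoothPotential, if_neg (by linarith), if_neg (by linarith),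
            if_pos (by linarith)]
        · rw [smoothPotential, if_neg (by linarith), if_neg (by linarith),
            if_pos (by linarith)]
          norm_num
      · norm_num
    · -- 1 < x < 1 + l : piece 2
      refine ⟨x * (x ^ 2 - 1) + 1 / (2 * l ^ 2) * (x - 1) ^ 2, ?_, ?_⟩
      · refine (hP2 l hl x).congr_of_eventuallyEq ?_
        filter_upwards [IsOpen.mem_nhds isOpen_Ioo (show x ∈ Set.Ioo 1 (1 + l) from ⟨hF, hA⟩)]
          with y hy
        obtain ⟨hy1, hy2⟩ := hy
        rw [smoothPotential, if_neg (by linarith), if_pos hy1]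
      · have h2 : 0 ≤ (x * (x - 1) ^ 2) / (2 * l ^ 2) :=
          div_nonneg (mul_nonneg (by linarith) (sq_nonneg _)) (by positivity)
        have e : x * (x * (x ^ 2 - 1) + 1 / (2 * l ^ 2) * (x - 1) ^ 2) =
            (x * (x - 1) ^ 2) / (2 * l ^ 2) + (x ^ 4 - x ^ 2) := by ring
        linarith
  · -- x = 1 + l : glue pieces 2 and 1
    subst hB
    refine ⟨1 / l * ((1 + l) - (1 + l / 2)) + (1 + l) * ((1 + l) ^ 2 - 1), ?_, ?_⟩
    · refine glueDeriv (f := fun y : ℝ => 1 / 4 * (y ^ 2 - 1) ^ 2 + 1 / (6 * l ^ 2) * (y - 1) ^ 3)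
          ?_ (hP1 l hl _) ?_ ?_ ?_ ?_
      · have h := hP2 l hl (1 + l)
        convert h using 1
        field_simp
        ring
      · filter_upwards [self_mem_nhdsWithin,
          nhdsWithin_le_nhds (Ioi_mem_nhds (show (1 : ℝ) < 1 + l by linarith))]
          with y hy1 hy2
        simp only [Set.mem_Iic] at hy1
        simp only [Set.mem_Ioi] at hy2
        rcases eq_or_lt_of_le hy1 with h | h
        · rw [smoothPotential, if_pos (by linarith)]
          rw [h]
          field_simp
          ring
        · rw [smoothPotential, if_neg (by linarith), if_pos hy2]
      · refine Filter.eventuallyEq_of_mem self_mem_nhdsWithin fun y hy => ?_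
        simp only [Set.mem_Ici] at hy
        rw [smoothPotential, if_pos hy]
      · rw [smoothPotential, if_pos le_rfl]
        field_simp
        ring
      · rw [smoothPotential, if_pos le_rfl]
    · set x : ℝ := 1 + l with hx
      have h2 : 0 ≤ (x * (x - (1 + l / 2))) / l :=
        div_nonneg (mul_nonneg (by rw [hx]; linarith) (by rw [hx]; linarith)) hl0.le
      have e : x * (1 / l * (x - (1 + l / 2)) + x * (x ^ 2 - 1)) =
          (x * (x - (1 + l / 2))) / l + (x ^ 4 - x ^ 2) := by ring
      linarith
  · -- 1 + l < x : piece 1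
    refine ⟨1 / l * (x - (1 + l / 2)) + x * (x ^ 2 - 1), ?_, ?_⟩
    · refine (hP1 l hl x).congr_of_eventuallyEq ?_
      filter_upwards [Ioi_mem_nhds hC] with y hy
      rw [smoothPotential, if_pos (le_of_lt hy)]
    · have h2 : 0 ≤ (x * (x - (1 + l / 2))) / l :=
        div_nonneg (mul_nonneg (by linarith) (by linarith)) hl0.le
      have e : x * (1 / l * (x - (1 + l / 2)) + x * (x ^ 2 - 1)) =
          (x * (x - (1 + l / 2))) / l + (x ^ 4 - x ^ 2) := by ring
      linarith

theorem mul_deriv_smoothPotential_ge (l : ℝ) (hl : l ∈ Set.Ioo (0 : ℝ) 1) (x : ℝ) :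
    x * deriv (smoothPotential l) x ≥ x ^ 4 - x ^ 2 := by
  obtain ⟨D, hD, hineq⟩ := key l hl.1 hl.2 x
  rw [hD.deriv]
  exact hineq
end

section
/- For every λ ∈ (0,1) and every χ ∈ ℝ, the second derivative of f_λ satisfies f_λ''(χ) ≥ 3χ² − 1. -/
open Set Filter

/-- First derivative of the smoothed potential. -/
noncomputable def sPD (l x : ℝ) : ℝ :=
  if 1 + l ≤ x then 1 / l * (x - (1 + l / 2)) + (x ^ 3 - x)
  else if 1 < x then (x ^ 3 - x) + 1 / (2 * l ^ 2) * (x - 1) ^ 2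
  else if -1 ≤ x then x ^ 3 - x
  else if -1 - l < x then (x ^ 3 - x) - 1 / (2 * l ^ 2) * (x + 1) ^ 2
  else 1 / l * (x + (1 + l / 2)) + (x ^ 3 - x)

/-- Second derivative of the smoothed potential. -/
noncomputable def sPD2 (l x : ℝ) : ℝ :=
  if 1 + l ≤ x then 1 / l + (3 * x ^ 2 - 1)
  else if 1 < x then (3 * x ^ 2 - 1) + 1 / l ^ 2 * (x - 1)
  else if -1 ≤ x then 3 * x ^ 2 - 1
  else if -1 - l < x then (3 * x ^ 2 - 1) - 1 / l ^ 2 * (x + 1)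
  else 1 / l + (3 * x ^ 2 - 1)

/-- Gluing lemma for differentiability at a junction point. -/
lemma glueDeriv_s5 {f fl fr : ℝ → ℝ} {a d : ℝ}
    (hfl : HasDerivAt fl d a) (hfr : HasDerivAt fr d a)
    (hleft : ∀ᶠ y in nhdsWithin a (Set.Iio a), f y = fl y)
    (hright : ∀ᶠ y in nhdsWithin a (Set.Ioi a), f y = fr y)
    (hal : f a = fl a) (har : f a = fr a) : HasDerivAt f d a := by
  have hleft' : ∀ᶠ y in nhdsWithin a (Set.Iic a), f y = fl y := by
    rw [← Set.Iio_insert, nhdsWithin_insert, Filter.eventually_sup]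
    exact ⟨by simpa using hal, hleft⟩
  have hright' : ∀ᶠ y in nhdsWithin a (Set.Ici a), f y = fr y := by
    rw [← Set.Ioi_insert, nhdsWithin_insert, Filter.eventually_sup]
    exact ⟨by simpa using har, hright⟩
  have h1 : HasDerivWithinAt f d (Set.Iic a) a :=
    (hfl.hasDerivWithinAt).congr_of_eventuallyEq hleft' hal
  have h2 : HasDerivWithinAt f d (Set.Ici a) a :=
    (hfr.hasDerivWithinAt).congr_of_eventuallyEq hright' har
  have h3 := h1.union h2
  rw [Set.Iic_union_Ici] at h3
  exact hasDerivWithinAt_univ.mp h3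

/-- Derivative replacement on an open neighborhood set. -/
lemma hasDerivAt_congr_on {f p : ℝ → ℝ} {s : Set ℝ} {x d : ℝ} (hs : s ∈ nhds x)
    (h : ∀ y ∈ s, f y = p y) (hp : HasDerivAt p d x) : HasDerivAt f d x :=
  hp.congr_of_eventuallyEq (Filter.eventually_of_mem hs h)

section pieces

variable (l : ℝ)

-- the five pieces
noncomputable def P1 : ℝ → ℝ := fun y =>
  1 / (2 * l) * (y - (1 + l / 2)) ^ 2 + 1 / 4 * (y ^ 2 - 1) ^ 2 + l / 24
noncomputable def P2 : ℝ → ℝ := fun y =>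
  1 / 4 * (y ^ 2 - 1) ^ 2 + 1 / (6 * l ^ 2) * (y - 1) ^ 3
noncomputable def P3 (l : ℝ) : ℝ → ℝ := fun y => 1 / 4 * (y ^ 2 - 1) ^ 2
noncomputable def P4 : ℝ → ℝ := fun y =>
  1 / 4 * (y ^ 2 - 1) ^ 2 - 1 / (6 * l ^ 2) * (y + 1) ^ 3
noncomputable def P5 : ℝ → ℝ := fun y =>
  1 / (2 * l) * (y + (1 + l / 2)) ^ 2 + 1 / 4 * (y ^ 2 - 1) ^ 2 + l / 24

-- region equalities for smoothPotential
lemma feq1 {y : ℝ} (h : 1 + l ≤ y) : smoothPotential l y = P1 l y := by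
  rw [smoothPotential, if_pos h]; rfl
lemma feq2 {y : ℝ} (h1 : 1 < y) (h2 : y < 1 + l) : smoothPotential l y = P2 l y := by
  rw [smoothPotential, if_neg (not_le.mpr h2), if_pos h1]; rfl
lemma feq3 {y : ℝ} (hl : 0 < l) (h1 : -1 ≤ y) (h2 : y ≤ 1) :
    smoothPotential l y = P3 l y := by
  rw [smoothPotential, if_neg (by linarith), if_neg (by linarith), if_pos h1]; rfl
lemma feq4 {y : ℝ} (hl : 0 < l) (h1 : -1 - l < y) (h2 : y < -1) :
    smoothPotential l y = P4 l y := by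
  rw [smoothPotential, if_neg (by linarith), if_neg (by linarith), if_neg (by linarith),
    if_pos h1]; rfl
lemma feq5 {y : ℝ} (hl : 0 < l) (h : y ≤ -1 - l) : smoothPotential l y = P5 l y := by
  rw [smoothPotential, if_neg (by linarith), if_neg (by linarith), if_neg (by linarith),
    if_neg (not_lt.mpr h)]; rfl

-- region equalities for sPD
noncomputable def Q1 : ℝ → ℝ := fun y => 1 / l * (y - (1 + l / 2)) + (y ^ 3 - y)
noncomputable def Q2 : ℝ → ℝ := fun y => (y ^ 3 - y) + 1 / (2 * l ^ 2) * (y - 1) ^ 2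
noncomputable def Q3 (l : ℝ) : ℝ → ℝ := fun y => y ^ 3 - y
noncomputable def Q4 : ℝ → ℝ := fun y => (y ^ 3 - y) - 1 / (2 * l ^ 2) * (y + 1) ^ 2
noncomputable def Q5 : ℝ → ℝ := fun y => 1 / l * (y + (1 + l / 2)) + (y ^ 3 - y)

lemma geq1 {y : ℝ} (h : 1 + l ≤ y) : sPD l y = Q1 l y := by
  rw [sPD, if_pos h]; rfl
lemma geq2 {y : ℝ} (h1 : 1 < y) (h2 : y < 1 + l) : sPD l y = Q2 l y := by
  rw [sPD, if_neg (not_le.mpr h2), if_pos h1]; rfl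
lemma geq3 {y : ℝ} (hl : 0 < l) (h1 : -1 ≤ y) (h2 : y ≤ 1) : sPD l y = Q3 l y := by
  rw [sPD, if_neg (by linarith), if_neg (by linarith), if_pos h1]; rfl
lemma geq4 {y : ℝ} (hl : 0 < l) (h1 : -1 - l < y) (h2 : y < -1) : sPD l y = Q4 l y := by
  rw [sPD, if_neg (by linarith), if_neg (by linarith), if_neg (by linarith), if_pos h1]; rfl
lemma geq5 {y : ℝ} (hl : 0 < l) (h : y ≤ -1 - l) : sPD l y = Q5 l y := by
  rw [sPD, if_neg (by linarith), if_neg (by linarith), if_neg (by linarith),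
    if_neg (not_lt.mpr h)]; rfl

variable {l}

-- derivatives of the pieces
lemma hP1_s5 (hl : l ≠ 0) (x : ℝ) : HasDerivAt (P1 l) (Q1 l x) x := by
  have h := ((((hasDerivAt_id' (𝕜 := ℝ) (x := x)).sub_const (1 + l / 2)).pow 2).const_mul
      (1 / (2 * l))).add
    ((((hasDerivAt_pow 2 x).sub_const 1).pow 2).const_mul (1 / 4)) |>.add_const (l / 24)
  refine h.congr_deriv ?_
  unfold Q1; push_cast; field_simp; ring

lemma hP2_s5 (hl : l ≠ 0) (x : ℝ) : HasDerivAt (P2 l) (Q2 l x) x := by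
  have h := ((((hasDerivAt_pow 2 x).sub_const 1).pow 2).const_mul (1 / 4)).add
    ((((hasDerivAt_id' (𝕜 := ℝ) (x := x)).sub_const 1).pow 3).const_mul (1 / (6 * l ^ 2)))
  refine h.congr_deriv ?_
  unfold Q2; push_cast; field_simp; ring

lemma hP3 (x : ℝ) : HasDerivAt (P3 l) (Q3 l x) x := by
  have h := (((hasDerivAt_pow 2 x).sub_const 1).pow 2).const_mul (1 / 4 : ℝ)
  refine h.congr_deriv ?_
  unfold Q3; push_cast; ring

lemma hP4_s5 (hl : l ≠ 0) (x : ℝ) : HasDerivAt (P4 l) (Q4 l x) x := by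
  have h := ((((hasDerivAt_pow 2 x).sub_const 1).pow 2).const_mul (1 / 4)).sub
    ((((hasDerivAt_id' (𝕜 := ℝ) (x := x)).add_const 1).pow 3).const_mul (1 / (6 * l ^ 2)))
  refine h.congr_deriv ?_
  unfold Q4; push_cast; field_simp; ring

lemma hP5_s5 (hl : l ≠ 0) (x : ℝ) : HasDerivAt (P5 l) (Q5 l x) x := by
  have h := ((((hasDerivAt_id' (𝕜 := ℝ) (x := x)).add_const (1 + l / 2)).pow 2).const_mul
      (1 / (2 * l))).add
    ((((hasDerivAt_pow 2 x).sub_const 1).pow 2).const_mul (1 / 4)) |>.add_const (l / 24)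
  refine h.congr_deriv ?_
  unfold Q5; push_cast; field_simp; ring

-- derivatives of the derivative pieces
lemma hQ1 (hl : l ≠ 0) (x : ℝ) : HasDerivAt (Q1 l) (1 / l + (3 * x ^ 2 - 1)) x := by
  have h := (((hasDerivAt_id' (𝕜 := ℝ) (x := x)).sub_const (1 + l / 2)).const_mul (1 / l)).add
    ((hasDerivAt_pow 3 x).sub (hasDerivAt_id' (𝕜 := ℝ) (x := x)))
  refine h.congr_deriv ?_
  push_cast; ring

lemma hQ2 (hl : l ≠ 0) (x : ℝ) :
    HasDerivAt (Q2 l) ((3 * x ^ 2 - 1) + 1 / l ^ 2 * (x - 1)) x := by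
  have h := ((hasDerivAt_pow 3 x).sub (hasDerivAt_id' (𝕜 := ℝ) (x := x))).add
    ((((hasDerivAt_id' (𝕜 := ℝ) (x := x)).sub_const 1).pow 2).const_mul (1 / (2 * l ^ 2)))
  refine h.congr_deriv ?_
  push_cast; field_simp

lemma hQ3 (x : ℝ) : HasDerivAt (Q3 l) (3 * x ^ 2 - 1) x := by
  have h := (hasDerivAt_pow 3 x).sub (hasDerivAt_id' (𝕜 := ℝ) (x := x))
  refine h.congr_deriv ?_; norm_num

lemma hQ4 (hl : l ≠ 0) (x : ℝ) :
    HasDerivAt (Q4 l) ((3 * x ^ 2 - 1) - 1 / l ^ 2 * (x + 1)) x := by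
  have h := ((hasDerivAt_pow 3 x).sub (hasDerivAt_id' (𝕜 := ℝ) (x := x))).sub
    ((((hasDerivAt_id' (𝕜 := ℝ) (x := x)).add_const 1).pow 2).const_mul (1 / (2 * l ^ 2)))
  refine h.congr_deriv ?_
  push_cast; field_simp

lemma hQ5 (hl : l ≠ 0) (x : ℝ) : HasDerivAt (Q5 l) (1 / l + (3 * x ^ 2 - 1)) x := by
  have h := (((hasDerivAt_id' (𝕜 := ℝ) (x := x)).add_const (1 + l / 2)).const_mul (1 / l)).add
    ((hasDerivAt_pow 3 x).sub (hasDerivAt_id' (𝕜 := ℝ) (x := x)))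
  refine h.congr_deriv ?_
  push_cast; ring

end pieces

lemma hasDerivAt_smoothPotential {l : ℝ} (hl : 0 < l) (x : ℝ) :
    HasDerivAt (smoothPotential l) (sPD l x) x := by
  have hl' : l ≠ 0 := ne_of_gt hl
  rcases lt_or_ge x (-1 - l) with h5 | h5
  · -- interior of region 5
    rw [geq5 l hl (le_of_lt h5)]
    exact hasDerivAt_congr_on (Iio_mem_nhds h5) (fun y hy => feq5 l hl (le_of_lt hy))
      (hP5_s5 hl' x)
  rcases eq_or_lt_of_le h5 with h5e | h5
  · -- junction at -1 - l
    have hxe : x = -1 - l := h5e.symm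
    subst hxe
    have hval : sPD l (-1 - l) = Q5 l (-1 - l) := geq5 l hl le_rfl
    rw [hval]
    have hQQ : Q4 l (-1 - l) = Q5 l (-1 - l) := by unfold Q4 Q5; field_simp; ring
    refine glueDeriv_s5 (hP5_s5 hl' (-1 - l)) (hQQ ▸ hP4_s5 hl' (-1 - l)) ?_ ?_
      (feq5 l hl le_rfl) ?_
    · exact Filter.eventually_of_mem self_mem_nhdsWithin
        (fun y hy => feq5 l hl (le_of_lt hy))
    · have hs : Set.Iio (-1 : ℝ) ∈ nhdsWithin (-1 - l) (Set.Ioi (-1 - l)) :=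
        mem_nhdsWithin_of_mem_nhds (Iio_mem_nhds (by linarith))
      filter_upwards [hs, self_mem_nhdsWithin] with y hy1 hy2
      exact feq4 l hl hy2 hy1
    · rw [feq5 l hl le_rfl]
      unfold P4 P5; field_simp; ring
  rcases lt_or_ge x (-1) with h4 | h4
  · -- interior of region 4
    rw [geq4 l hl h5 h4]
    exact hasDerivAt_congr_on (Ioo_mem_nhds h5 h4)
      (fun y hy => feq4 l hl hy.1 hy.2) (hP4_s5 hl' x)
  rcases eq_or_lt_of_le h4 with h4e | h4
  · -- junction at -1
    have h4e' : x = -1 := h4e.symm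
    subst h4e'
    have hval : sPD l (-1) = Q3 l (-1) := geq3 l hl le_rfl (by norm_num)
    rw [hval]
    have hQQ : Q4 l (-1) = Q3 l (-1) := by unfold Q3 Q4; field_simp; ring
    refine glueDeriv_s5 (hQQ ▸ hP4_s5 hl' (-1)) (hP3 (-1)) ?_ ?_ ?_
      (feq3 l hl le_rfl (by norm_num))
    · have hs : Set.Ioi (-1 - l) ∈ nhdsWithin (-1 : ℝ) (Set.Iio (-1)) :=
        mem_nhdsWithin_of_mem_nhds (Ioi_mem_nhds (by linarith))
      filter_upwards [hs, self_mem_nhdsWithin] with y hy1 hy2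
      exact feq4 l hl hy1 hy2
    · have hs : Set.Iio (1 : ℝ) ∈ nhdsWithin (-1 : ℝ) (Set.Ioi (-1)) :=
        mem_nhdsWithin_of_mem_nhds (Iio_mem_nhds (by norm_num))
      filter_upwards [hs, self_mem_nhdsWithin] with y hy1 hy2
      exact feq3 l hl (le_of_lt hy2) (le_of_lt hy1)
    · rw [feq3 l hl le_rfl (by norm_num)]
      unfold P3 P4; field_simp; ring
  rcases lt_or_ge x 1 with h3 | h3
  · -- interior of region 3
    rw [geq3 l hl (le_of_lt h4) (le_of_lt h3)]
    exact hasDerivAt_congr_on (Ioo_mem_nhds h4 h3)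
      (fun y hy => feq3 l hl (le_of_lt hy.1) (le_of_lt hy.2)) (hP3 x)
  rcases eq_or_lt_of_le h3 with h3e | h3
  · -- junction at 1
    have h3e' : x = 1 := h3e.symm
    subst h3e'
    have hval : sPD l 1 = Q3 l 1 := geq3 l hl (by norm_num) le_rfl
    rw [hval]
    have hQQ : Q2 l 1 = Q3 l 1 := by unfold Q2 Q3; field_simp; ring
    refine glueDeriv_s5 (hP3 1) (hQQ ▸ hP2_s5 hl' 1) ?_ ?_
      (feq3 l hl (by norm_num) le_rfl) ?_
    · have hs : Set.Ioi (-1 : ℝ) ∈ nhdsWithin (1 : ℝ) (Set.Iio 1) :=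
        mem_nhdsWithin_of_mem_nhds (Ioi_mem_nhds (by norm_num))
      filter_upwards [hs, self_mem_nhdsWithin] with y hy1 hy2
      exact feq3 l hl (le_of_lt hy1) (le_of_lt hy2)
    · have hs : Set.Iio (1 + l) ∈ nhdsWithin (1 : ℝ) (Set.Ioi 1) :=
        mem_nhdsWithin_of_mem_nhds (Iio_mem_nhds (by linarith))
      filter_upwards [hs, self_mem_nhdsWithin] with y hy1 hy2
      exact feq2 l hy2 hy1
    · rw [feq3 l hl (by norm_num) le_rfl]
      unfold P2 P3; field_simp; ring
  rcases lt_or_ge x (1 + l) with h2 | h2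
  · -- interior of region 2
    rw [geq2 l h3 h2]
    exact hasDerivAt_congr_on (Ioo_mem_nhds h3 h2)
      (fun y hy => feq2 l hy.1 hy.2) (hP2_s5 hl' x)
  rcases eq_or_lt_of_le h2 with h2e | h2
  · -- junction at 1 + l
    have h2e' : x = 1 + l := h2e.symm
    subst h2e'
    have hval : sPD l (1 + l) = Q1 l (1 + l) := geq1 l le_rfl
    rw [hval]
    have hQQ : Q2 l (1 + l) = Q1 l (1 + l) := by unfold Q1 Q2; field_simp; ring
    refine glueDeriv_s5 (hQQ ▸ hP2_s5 hl' (1 + l)) (hP1_s5 hl' (1 + l)) ?_ ?_ ?_ (feq1 l le_rfl)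
    · have hs : Set.Ioi (1 : ℝ) ∈ nhdsWithin (1 + l) (Set.Iio (1 + l)) :=
        mem_nhdsWithin_of_mem_nhds (Ioi_mem_nhds (by linarith))
      filter_upwards [hs, self_mem_nhdsWithin] with y hy1 hy2
      exact feq2 l hy1 hy2
    · exact Filter.eventually_of_mem self_mem_nhdsWithin
        (fun y hy => feq1 l (le_of_lt hy))
    · rw [feq1 l le_rfl]
      unfold P1 P2; field_simp; ring
  · -- interior of region 1
    rw [geq1 l (le_of_lt h2)]
    exact hasDerivAt_congr_on (Ioi_mem_nhds h2) (fun y hy => feq1 l (le_of_lt hy))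
      (hP1_s5 hl' x)

lemma hasDerivAt_sPD {l : ℝ} (hl : 0 < l) (x : ℝ) :
    HasDerivAt (sPD l) (sPD2 l x) x := by
  have hl' : l ≠ 0 := ne_of_gt hl
  rcases lt_or_ge x (-1 - l) with h5 | h5
  · rw [show sPD2 l x = 1 / l + (3 * x ^ 2 - 1) by
      rw [sPD2, if_neg (by linarith), if_neg (by linarith), if_neg (by linarith),
        if_neg (by linarith)]]
    exact hasDerivAt_congr_on (Iio_mem_nhds h5) (fun y hy => geq5 l hl (le_of_lt hy))
      (hQ5 hl' x)
  rcases eq_or_lt_of_le h5 with h5e | h5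
  · have hxe : x = -1 - l := h5e.symm
    subst hxe
    rw [show sPD2 l (-1 - l) = 1 / l + (3 * (-1 - l) ^ 2 - 1) by
      rw [sPD2, if_neg (by linarith), if_neg (by linarith), if_neg (by linarith),
        if_neg (by linarith)]]
    have hQQ : (3 * (-1 - l) ^ 2 - 1) - 1 / l ^ 2 * ((-1 - l) + 1)
        = 1 / l + (3 * (-1 - l) ^ 2 - 1) := by field_simp; ring
    refine glueDeriv_s5 (hQ5 hl' (-1 - l)) (hQQ ▸ hQ4 hl' (-1 - l)) ?_ ?_
      (geq5 l hl le_rfl) ?_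
    · exact Filter.eventually_of_mem self_mem_nhdsWithin
        (fun y hy => geq5 l hl (le_of_lt hy))
    · have hs : Set.Iio (-1 : ℝ) ∈ nhdsWithin (-1 - l) (Set.Ioi (-1 - l)) :=
        mem_nhdsWithin_of_mem_nhds (Iio_mem_nhds (by linarith))
      filter_upwards [hs, self_mem_nhdsWithin] with y hy1 hy2
      exact geq4 l hl hy2 hy1
    · rw [geq5 l hl le_rfl]
      unfold Q4 Q5; field_simp; ring
  rcases lt_or_ge x (-1) with h4 | h4
  · rw [show sPD2 l x = (3 * x ^ 2 - 1) - 1 / l ^ 2 * (x + 1) by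
      rw [sPD2, if_neg (by linarith), if_neg (by linarith), if_neg (by linarith),
        if_pos h5]]
    exact hasDerivAt_congr_on (Ioo_mem_nhds h5 h4)
      (fun y hy => geq4 l hl hy.1 hy.2) (hQ4 hl' x)
  rcases eq_or_lt_of_le h4 with h4e | h4
  · have h4e' : x = -1 := h4e.symm
    subst h4e'
    rw [show sPD2 l (-1) = 3 * (-1 : ℝ) ^ 2 - 1 by
      rw [sPD2, if_neg (by linarith), if_neg (by norm_num), if_pos le_rfl]]
    have hQQ : (3 * (-1 : ℝ) ^ 2 - 1) - 1 / l ^ 2 * ((-1) + 1) = 3 * (-1 : ℝ) ^ 2 - 1 := by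
      ring
    refine glueDeriv_s5 (hQQ ▸ hQ4 hl' (-1)) (hQ3 (-1)) ?_ ?_ ?_
      (geq3 l hl le_rfl (by norm_num))
    · have hs : Set.Ioi (-1 - l) ∈ nhdsWithin (-1 : ℝ) (Set.Iio (-1)) :=
        mem_nhdsWithin_of_mem_nhds (Ioi_mem_nhds (by linarith))
      filter_upwards [hs, self_mem_nhdsWithin] with y hy1 hy2
      exact geq4 l hl hy1 hy2
    · have hs : Set.Iio (1 : ℝ) ∈ nhdsWithin (-1 : ℝ) (Set.Ioi (-1)) :=
        mem_nhdsWithin_of_mem_nhds (Iio_mem_nhds (by norm_num))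
      filter_upwards [hs, self_mem_nhdsWithin] with y hy1 hy2
      exact geq3 l hl (le_of_lt hy2) (le_of_lt hy1)
    · rw [geq3 l hl le_rfl (by norm_num)]
      unfold Q3 Q4; field_simp; ring
  rcases lt_or_ge x 1 with h3 | h3
  · rw [show sPD2 l x = 3 * x ^ 2 - 1 by
      rw [sPD2, if_neg (by linarith), if_neg (by linarith), if_pos (le_of_lt h4)]]
    exact hasDerivAt_congr_on (Ioo_mem_nhds h4 h3)
      (fun y hy => geq3 l hl (le_of_lt hy.1) (le_of_lt hy.2)) (hQ3 x)
  rcases eq_or_lt_of_le h3 with h3e | h3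
  · have h3e' : x = 1 := h3e.symm
    subst h3e'
    rw [show sPD2 l 1 = 3 * (1 : ℝ) ^ 2 - 1 by
      rw [sPD2, if_neg (by linarith), if_neg (by norm_num), if_pos (by norm_num)]]
    have hQQ : (3 * (1 : ℝ) ^ 2 - 1) + 1 / l ^ 2 * (1 - 1) = 3 * (1 : ℝ) ^ 2 - 1 := by
      ring
    refine glueDeriv_s5 (hQ3 1) (hQQ ▸ hQ2 hl' 1) ?_ ?_
      (geq3 l hl (by norm_num) le_rfl) ?_
    · have hs : Set.Ioi (-1 : ℝ) ∈ nhdsWithin (1 : ℝ) (Set.Iio 1) :=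
        mem_nhdsWithin_of_mem_nhds (Ioi_mem_nhds (by norm_num))
      filter_upwards [hs, self_mem_nhdsWithin] with y hy1 hy2
      exact geq3 l hl (le_of_lt hy1) (le_of_lt hy2)
    · have hs : Set.Iio (1 + l) ∈ nhdsWithin (1 : ℝ) (Set.Ioi 1) :=
        mem_nhdsWithin_of_mem_nhds (Iio_mem_nhds (by linarith))
      filter_upwards [hs, self_mem_nhdsWithin] with y hy1 hy2
      exact geq2 l hy2 hy1
    · rw [geq3 l hl (by norm_num) le_rfl]
      unfold Q2 Q3; field_simp; ring
  rcases lt_or_ge x (1 + l) with h2 | h2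
  · rw [show sPD2 l x = (3 * x ^ 2 - 1) + 1 / l ^ 2 * (x - 1) by
      rw [sPD2, if_neg (not_le.mpr h2), if_pos h3]]
    exact hasDerivAt_congr_on (Ioo_mem_nhds h3 h2)
      (fun y hy => geq2 l hy.1 hy.2) (hQ2 hl' x)
  rcases eq_or_lt_of_le h2 with h2e | h2
  · have h2e' : x = 1 + l := h2e.symm
    subst h2e'
    rw [show sPD2 l (1 + l) = 1 / l + (3 * (1 + l) ^ 2 - 1) by
      rw [sPD2, if_pos le_rfl]]
    have hQQ : (3 * (1 + l) ^ 2 - 1) + 1 / l ^ 2 * ((1 + l) - 1)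
        = 1 / l + (3 * (1 + l) ^ 2 - 1) := by field_simp; ring
    refine glueDeriv_s5 (hQQ ▸ hQ2 hl' (1 + l)) (hQ1 hl' (1 + l)) ?_ ?_ ?_ (geq1 l le_rfl)
    · have hs : Set.Ioi (1 : ℝ) ∈ nhdsWithin (1 + l) (Set.Iio (1 + l)) :=
        mem_nhdsWithin_of_mem_nhds (Ioi_mem_nhds (by linarith))
      filter_upwards [hs, self_mem_nhdsWithin] with y hy1 hy2
      exact geq2 l hy1 hy2
    · exact Filter.eventually_of_mem self_mem_nhdsWithin
        (fun y hy => geq1 l (le_of_lt hy))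
    · rw [geq1 l le_rfl]
      unfold Q1 Q2; field_simp; ring
  · rw [show sPD2 l x = 1 / l + (3 * x ^ 2 - 1) by rw [sPD2, if_pos (le_of_lt h2)]]
    exact hasDerivAt_congr_on (Ioi_mem_nhds h2) (fun y hy => geq1 l (le_of_lt hy))
      (hQ1 hl' x)

theorem deriv2_smoothPotential_ge (l : ℝ) (hl : l ∈ Set.Ioo (0 : ℝ) 1) (x : ℝ) :
    deriv (deriv (smoothPotential l)) x ≥ 3 * x ^ 2 - 1 := by
  obtain ⟨hl0, _⟩ := hl
  have h1 : deriv (smoothPotential l) = sPD l :=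
    funext fun y => (hasDerivAt_smoothPotential hl0 y).deriv
  rw [h1, (hasDerivAt_sPD hl0 x).deriv, sPD2]
  have hlpos : (0 : ℝ) < 1 / l := by positivity
  have hl2 : (0 : ℝ) < 1 / l ^ 2 := by positivity
  split_ifs with c1 c2 c3 c4
  · linarith
  · push_neg at c1
    nlinarith
  · linarith
  · push_neg at c3
    nlinarith
  · linarith
end
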